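/- Suppose additionally that y >= sqrt(1 - (x - 1/2)^2) + 3*sqrt(3)/2 (region R4_4). Then the configuration p : Fin 4 -> R^2 given by p 0 = (0,0), p 1 = (1/2, sqrt(3)/2), p 2 = (0, sqrt(3)), p 3 = (1/2, 3*sqrt(3)/2) is a packing of 4 equal circles of radius 1/2 on the flat torus R^2/Lambda; that is, ||p i - p j + lambda|| >= 1 for all i, j in Fin 4 and all lambda in Lambda with (i ≠ j or lambda ≠ 0). -/
import Mathlib


noncomputable section

/-- The point `(a, b)` in the Euclidean plane. -/
def pt (a b : ℝ) : EuclideanSpace ℝ (Fin 2) :=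
  (WithLp.equiv 2 (Fin 2 → ℝ)).symm ![a, b]

/-- The lattice generated by `v1 = (1,0)` and `v2 = (x,y)`. -/
def TLat (x y : ℝ) : Set (EuclideanSpace ℝ (Fin 2)) :=
  {v | ∃ m n : ℤ, v = (m : ℝ) • pt 1 0 + (n : ℝ) • pt x y}

/-- `p` is a packing of `k` equal circles of radius `r` on the flat torus `ℝ²/Λ(x,y)`. -/
def IsPacking (x y : ℝ) {k : ℕ} (r : ℝ) (p : Fin k → EuclideanSpace ℝ (Fin 2)) : Prop :=
  ∀ i j : Fin k, ∀ l ∈ TLat x y, (i ≠ j ∨ l ≠ 0) → 2 * r ≤ ‖p i - p j + l‖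

set_option maxHeartbeats 4000000

lemma int_shift_sq (m : ℤ) (t : ℝ) (h1 : -(1/2) ≤ t) (h2 : t ≤ 1/2) :
    t^2 ≤ (t + m)^2 := by
  rcases lt_trichotomy m 0 with hm | hm | hm
  · have hm' : (m:ℝ) ≤ -1 := by exact_mod_cast (by omega : m ≤ -1)
    nlinarith
  · simp [hm]
  · have hm' : (1:ℝ) ≤ m := by exact_mod_cast hm
    nlinarith

lemma sum_ge_of_B (A B : ℝ) (h : (1.6:ℝ) ≤ B) : 1 ≤ A^2 + B^2 := by
  nlinarith [sq_nonneg A]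

lemma sum_ge_of_B' (A B : ℝ) (h : B ≤ -(1.6:ℝ)) : 1 ≤ A^2 + B^2 := by
  nlinarith [sq_nonneg A]

lemma key (x y : ℝ) (hy : 0 < y) (hx0 : 0 ≤ x) (hx1 : x ≤ 1/2)
    (hreg : Real.sqrt (1 - (x - 1/2)^2) + 3 * Real.sqrt 3 / 2 ≤ y)
    (m n : ℤ) (a b : ℝ)
    (hab : (a = 0 ∧ b = 0 ∧ (m ≠ 0 ∨ n ≠ 0)) ∨
      ((a = 1/2 ∨ a = -(1/2)) ∧ (b = Real.sqrt 3 / 2 ∨ b = -(Real.sqrt 3 / 2))) ∨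
      (a = 0 ∧ (b = Real.sqrt 3 ∨ b = -Real.sqrt 3)) ∨
      (a = 1/2 ∧ b = 3 * Real.sqrt 3 / 2) ∨
      (a = -(1/2) ∧ b = -(3 * Real.sqrt 3 / 2))) :
    1 ≤ (a + ((m:ℝ) + n*x))^2 + (b + n*y)^2 := by
  have hs3 : (Real.sqrt 3)^2 = 3 := Real.sq_sqrt (by norm_num)
  have h17 : (1.7:ℝ) ≤ Real.sqrt 3 := by
    rw [show (1.7:ℝ) = Real.sqrt (1.7^2) by rw [Real.sqrt_sq]; norm_num]
    exact Real.sqrt_le_sqrt (by norm_num)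
  have hs2 : (Real.sqrt (1 - (x - 1/2)^2))^2 = 1 - (x - 1/2)^2 :=
    Real.sq_sqrt (by nlinarith)
  have hs0 : 0 ≤ Real.sqrt (1 - (x - 1/2)^2) := Real.sqrt_nonneg _
  have hs_lb : Real.sqrt 3 / 2 ≤ Real.sqrt (1 - (x - 1/2)^2) := by
    nlinarith [hs2, hs0, h17, hs3]
  set s3 := Real.sqrt 3 with hs3def
  set s := Real.sqrt (1 - (x - 1/2)^2) with hsdef
  clear_value s3 s
  have hy2 : 2*s3 ≤ y := by linarith
  have H1 : (x - 1/2)^2 ≤ (x - 1/2 + m)^2 := int_shift_sq m _ (by linarith) (by linarith)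
  have H2 : (1/2 - x)^2 ≤ (1/2 - x + m)^2 := int_shift_sq m _ (by linarith) (by linarith)
  have H3 : ((1:ℝ)/2)^2 ≤ (1/2 + m)^2 := int_shift_sq m _ (by norm_num) (by norm_num)
  have H4 : ((1:ℝ)/2)^2 ≤ (-(1/2) + m)^2 := by
    have h := int_shift_sq m (-(1/2)) (by norm_num) (by norm_num); nlinarith [h]
  obtain hn | hn | hn | hn | hn : n = 0 ∨ n = 1 ∨ n = -1 ∨ 2 ≤ n ∨ n ≤ -2 := by omega
  · subst hn
    push_cast
    rcases hab with ⟨ha, hb, hmn⟩ | ⟨ha, hb⟩ | ⟨ha, hb⟩ | ⟨ha, hb⟩ | ⟨ha, hb⟩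
    · have hm : m ≠ 0 := by tauto
      have hm1 : (1:ℝ) ≤ (m:ℝ)^2 := by
        have h : 1 ≤ m^2 := by rcases (by omega : 1 ≤ m ∨ m ≤ -1) with h | h <;> nlinarith
        exact_mod_cast h
      subst ha; subst hb; nlinarith
    · rcases ha with ha | ha <;> rcases hb with hb | hb <;> subst ha <;> subst hb <;>
        nlinarith [H3, H4, hs3]
    · rcases hb with hb | hb <;> subst ha <;> subst hb <;>
        nlinarith [sq_nonneg ((0:ℝ) + ((m:ℝ) + 0*x)), hs3]
    · subst ha; subst hb; nlinarith [sq_nonneg ((1:ℝ)/2 + ((m:ℝ) + 0*x)), hs3]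
    · subst ha; subst hb; nlinarith [sq_nonneg (-(1:ℝ)/2 + ((m:ℝ) + 0*x)), hs3]
  · subst hn
    push_cast
    rcases hab with ⟨ha, hb, hmn⟩ | ⟨ha, hb⟩ | ⟨ha, hb⟩ | ⟨ha, hb⟩ | ⟨ha, hb⟩
    · subst ha; subst hb; exact sum_ge_of_B _ _ (by linarith)
    · rcases ha with ha | ha <;> rcases hb with hb | hb <;> subst ha <;> subst hb <;>
        exact sum_ge_of_B _ _ (by linarith)
    · rcases hb with hb | hb <;> subst ha <;> subst hb <;>
        exact sum_ge_of_B _ _ (by linarith)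
    · subst ha; subst hb; exact sum_ge_of_B _ _ (by linarith)
    · subst ha; subst hb
      have hc : s ≤ -(3*s3/2) + 1*y := by linarith
      have hB2 : s^2 ≤ (-(3*s3/2) + 1*y)^2 := by nlinarith [hc, hs0]
      nlinarith [H1, hs2, hB2]
  · subst hn
    push_cast
    rcases hab with ⟨ha, hb, hmn⟩ | ⟨ha, hb⟩ | ⟨ha, hb⟩ | ⟨ha, hb⟩ | ⟨ha, hb⟩
    · subst ha; subst hb; exact sum_ge_of_B' _ _ (by linarith)
    · rcases ha with ha | ha <;> rcases hb with hb | hb <;> subst ha <;> subst hb <;>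
        exact sum_ge_of_B' _ _ (by linarith)
    · rcases hb with hb | hb <;> subst ha <;> subst hb <;>
        exact sum_ge_of_B' _ _ (by linarith)
    · subst ha; subst hb
      have hc : 3*s3/2 + (-1)*y ≤ -s := by linarith
      have hB2 : s^2 ≤ (3*s3/2 + (-1)*y)^2 := by nlinarith [hc, hs0]
      nlinarith [H2, hs2, hB2]
    · subst ha; subst hb; exact sum_ge_of_B' _ _ (by linarith)
  · have hn' : (2:ℝ) ≤ (n:ℝ) := by exact_mod_cast hn
    have hny : 2*y ≤ (n:ℝ)*y := mul_le_mul_of_nonneg_right hn' hy.le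
    have hb_lb : -(3*s3/2) ≤ b := by
      rcases hab with ⟨ha, hb, hmn⟩ | ⟨ha, hb⟩ | ⟨ha, hb⟩ | ⟨ha, hb⟩ | ⟨ha, hb⟩ <;>
        first
        | (rcases hb with hb | hb <;> subst hb <;> linarith)
        | (subst hb; linarith)
    exact sum_ge_of_B _ _ (by linarith)
  · have hn' : (n:ℝ) ≤ -2 := by exact_mod_cast hn
    have hny : (n:ℝ)*y ≤ -(2*y) := by
      have := mul_le_mul_of_nonneg_right hn' hy.le; linarith
    have hb_ub : b ≤ 3*s3/2 := by
      rcases hab with ⟨ha, hb, hmn⟩ | ⟨ha, hb⟩ | ⟨ha, hb⟩ | ⟨ha, hb⟩ | ⟨ha, hb⟩ <;>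
        first
        | (rcases hb with hb | hb <;> subst hb <;> linarith)
        | (subst hb; linarith)
    exact sum_ge_of_B' _ _ (by linarith)

lemma pt_norm (a b : ℝ) : ‖pt a b‖ = Real.sqrt (a^2 + b^2) := by
  unfold pt
  rw [EuclideanSpace.norm_eq]
  simp [Fin.sum_univ_two, sq_abs]

lemma combo (a b c d x y : ℝ) (m n : ℤ) :
    pt a b - pt c d + ((m:ℝ) • pt 1 0 + (n:ℝ) • pt x y)
      = pt (a - c + ((m:ℝ) + n*x)) (b - d + n*y) := by
  unfold pt
  ext i
  fin_cases i <;> simp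

lemma combo0 (x y : ℝ) (m n : ℤ) :
    (m:ℝ) • pt 1 0 + (n:ℝ) • pt x y = pt ((m:ℝ) + n*x) ((n:ℝ)*y) := by
  unfold pt
  ext i
  fin_cases i <;> simp

lemma one_le_norm_pt (A B : ℝ) (h : 1 ≤ A^2 + B^2) : 1 ≤ ‖pt A B‖ := by
  rw [pt_norm, show (1:ℝ) = Real.sqrt 1 from (Real.sqrt_one).symm]
  exact Real.sqrt_le_sqrt h

lemma key' (x y : ℝ) (hy : 0 < y) (hx0 : 0 ≤ x) (hx1 : x ≤ 1/2)
    (hreg : Real.sqrt (1 - (x - 1/2)^2) + 3 * Real.sqrt 3 / 2 ≤ y)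
    (m n : ℤ) (a b c d : ℝ)
    (hab : (a - c = 0 ∧ b - d = 0 ∧ (m ≠ 0 ∨ n ≠ 0)) ∨
      ((a - c = 1/2 ∨ a - c = -(1/2)) ∧ (b - d = Real.sqrt 3 / 2 ∨ b - d = -(Real.sqrt 3 / 2))) ∨
      (a - c = 0 ∧ (b - d = Real.sqrt 3 ∨ b - d = -Real.sqrt 3)) ∨
      (a - c = 1/2 ∧ b - d = 3 * Real.sqrt 3 / 2) ∨
      (a - c = -(1/2) ∧ b - d = -(3 * Real.sqrt 3 / 2))) :
    1 ≤ ‖pt a b - pt c d + ((m:ℝ) • pt 1 0 + (n:ℝ) • pt x y)‖ := by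
  rw [combo]
  exact one_le_norm_pt _ _ (key x y hy hx0 hx1 hreg m n (a - c) (b - d) hab)

theorem four_circles_packing_R4 (x y : ℝ) (hxy : 1 ≤ x ^ 2 + y ^ 2) (hy : 0 < y) (hx0 : 0 ≤ x) (hx1 : x ≤ 1 / 2)
    (hreg : Real.sqrt (1 - (x - 1 / 2) ^ 2) + 3 * Real.sqrt 3 / 2 ≤ y)
    : IsPacking x y (1 / 2)
      ![pt 0 0, pt (1 / 2) (Real.sqrt 3 / 2), pt 0 (Real.sqrt 3),
        pt (1 / 2) (3 * Real.sqrt 3 / 2)] := by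
  intro i j l hl hne
  obtain ⟨m, n, rfl⟩ := hl
  norm_num only
  by_cases hij : i = j
  · subst hij
    have hl0 : (m:ℝ) • pt 1 0 + (n:ℝ) • pt x y ≠ 0 := by
      rcases hne with h | h
      · exact absurd rfl h
      · exact h
    have hmn : m ≠ 0 ∨ n ≠ 0 := by
      by_contra hc
      push_neg at hc
      obtain ⟨hm0, hn0⟩ := hc
      subst hm0; subst hn0
      simp at hl0
    have hk := key x y hy hx0 hx1 hreg m n 0 0 (Or.inl ⟨rfl, rfl, hmn⟩)
    rw [sub_self, zero_add, combo0]
    apply one_le_norm_pt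
    nlinarith [hk]
  · fin_cases i <;> fin_cases j <;>
      first
      | exact absurd rfl hij
      | exact key' x y hy hx0 hx1 hreg m n _ _ _ _ (by norm_num <;> ring_nf <;> tauto)
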